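/- Let n ≥ 2, p ≥ 1, and let X be a random vector uniformly distributed on the ℓ_p unit ball B_p^n. Set ξ1 = (e1+e2)/√2, ξ2 = (e1−e2)/√2 and define f(η1,η2) = E[⟨X,η1⟩²⟨X,η2⟩²] − E[⟨X,η1⟩²]·E[⟨X,η2⟩²]. Then for every pair of orthonormal vectors η1 = (η1(1),…,η1(n)), η2 = (η2(1),…,η2(n)) in S^{n−1}, f(η1,η2) = f(e1,e2) + 2·(f(ξ1,ξ2) − f(e1,e2)) · Σ_{i=1}^n η1(i)² η2(i)². -/

import Mathlib

open MeasureTheory Real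
open scoped RealInnerProductSpace ENNReal

noncomputable section

/-- `ℝⁿ` with the Euclidean structure. -/
abbrev E (n : ℕ) := EuclideanSpace ℝ (Fin n)

/-- The unit ball of the `ℓ_p` norm on `ℝⁿ`. -/
def lpBall (n : ℕ) (p : ℝ) : Set (E n) := {x | ∑ i, |x i| ^ p ≤ 1}

/-- The uniform probability measure (normalized Lebesgue measure) on a set `K ⊆ ℝⁿ`. -/
def unif {n : ℕ} (K : Set (E n)) : Measure (E n) := (volume K)⁻¹ • volume.restrict K

/-- `f(η₁,η₂) = E⟨X,η₁⟩²⟨X,η₂⟩² - E⟨X,η₁⟩² E⟨X,η₂⟩²` for `X` distributed according to `μ`. -/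
def covf {n : ℕ} (μ : Measure (E n)) (a b : E n) : ℝ :=
  (∫ x, ⟪x, a⟫ ^ 2 * ⟪x, b⟫ ^ 2 ∂μ) - (∫ x, ⟪x, a⟫ ^ 2 ∂μ) * (∫ x, ⟪x, b⟫ ^ 2 ∂μ)

/-- The canonical basis vectors of `ℝⁿ`. -/
def stdb {n : ℕ} (i : Fin n) : E n := EuclideanSpace.single i 1

variable {n : ℕ} {p : ℝ}

lemma measurableSet_lpBall : MeasurableSet (lpBall n p) := by
  have h : Measurable (fun x : E n => ∑ i, |x i| ^ p) := by
    apply Finset.measurable_sum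
    intro i _
    exact (((measurable_pi_apply i).comp (WithLp.measurable_ofLp _ _)).abs).pow_const p
  exact h measurableSet_Iic

lemma unif_ae_mem : ∀ᵐ x ∂(unif (lpBall n p)), x ∈ lpBall n p :=
  Measure.ae_smul_measure (ae_restrict_mem measurableSet_lpBall) _

instance : IsFiniteMeasure (unif (lpBall n p)) := by
  constructor
  rw [unif]
  simp only [Measure.smul_apply, Measure.restrict_apply MeasurableSet.univ, Set.univ_inter,
    smul_eq_mul]
  exact lt_of_le_of_lt (ENNReal.inv_mul_le_one _) (by norm_num)

lemma abs_coord_le (hp : 1 ≤ p) {x : E n} (hx : x ∈ lpBall n p) (i : Fin n) : |x i| ≤ 1 := by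
  by_contra h
  push_neg at h
  have h1 : (1:ℝ) < |x i| ^ p := Real.one_lt_rpow h (by linarith)
  have h2 : |x i| ^ p ≤ ∑ j, |x j| ^ p := by
    apply Finset.single_le_sum (fun j _ => Real.rpow_nonneg (abs_nonneg _) p) (Finset.mem_univ i)
  have := hx
  simp only [lpBall, Set.mem_setOf_eq] at this
  linarith

lemma integrable_bdd (f : E n → ℝ) (hf : Measurable f) (C : ℝ)
    (hb : ∀ x ∈ lpBall n p, |f x| ≤ C) : Integrable f (unif (lpBall n p)) := by
  refine Integrable.mono' (integrable_const C) hf.aestronglyMeasurable ?_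
  filter_upwards [unif_ae_mem] with x hx using by simpa using hb x hx

lemma integral_comp_iso (T : E n ≃ₗᵢ[ℝ] E n)
    (hT : (T : E n → E n) ⁻¹' (lpBall n p) = lpBall n p) (f : E n → ℝ) :
    ∫ x, f (T x) ∂(unif (lpBall n p)) = ∫ x, f x ∂(unif (lpBall n p)) := by
  have h1 : MeasurePreserving T (volume : Measure (E n)) volume := T.measurePreserving
  have h3 : MeasurePreserving T (unif (lpBall n p)) (unif (lpBall n p)) := by
    rw [unif]
    have := (h1.restrict_preimage (measurableSet_lpBall (n := n) (p := p))).smul_measure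
      (R := ℝ≥0∞) ((volume (lpBall n p))⁻¹)
    rwa [hT] at this
  exact h3.integral_comp (T.toHomeomorph.measurableEmbedding) f

lemma integral_comp_perm (σ : Equiv.Perm (Fin n)) (f : E n → ℝ) :
    ∫ x, f (WithLp.toLp 2 (fun a => x (σ a))) ∂(unif (lpBall n p)) = ∫ x, f x ∂(unif (lpBall n p)) := by
  have hT : ∀ (x : E n), (LinearIsometryEquiv.piLpCongrLeft 2 ℝ ℝ σ.symm x : E n)
      = WithLp.toLp 2 (fun a => x (σ a)) := by
    intro x
    ext a
    rw [LinearIsometryEquiv.piLpCongrLeft_apply]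
    rfl
  have h2 : ((LinearIsometryEquiv.piLpCongrLeft 2 ℝ ℝ σ.symm : E n ≃ₗᵢ[ℝ] E n) : E n → E n) ⁻¹'
      (lpBall n p) = lpBall n p := by
    ext x
    simp only [Set.mem_preimage, lpBall, Set.mem_setOf_eq, hT]
    constructor
    · intro h; calc ∑ i, |x i| ^ p = ∑ i, |x (σ i)| ^ p := (Equiv.sum_comp σ (fun i => |x i| ^ p)).symm
        _ ≤ 1 := h
    · intro h; calc ∑ i, |x (σ i)| ^ p = ∑ i, |x i| ^ p := Equiv.sum_comp σ (fun i => |x i| ^ p)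
        _ ≤ 1 := h
  have := integral_comp_iso (LinearIsometryEquiv.piLpCongrLeft 2 ℝ ℝ σ.symm) h2 f
  simp only [hT] at this
  exact this

/-- sign flip at coordinate t -/
def flipIso (t : Fin n) : E n ≃ₗᵢ[ℝ] E n :=
  LinearIsometryEquiv.piLpCongrRight 2
    (fun i => if i = t then LinearIsometryEquiv.neg ℝ else LinearIsometryEquiv.refl ℝ ℝ)

lemma flipIso_apply (t : Fin n) (x : E n) (a : Fin n) :
    flipIso t x a = if a = t then -x a else x a := by
  rw [flipIso, LinearIsometryEquiv.piLpCongrRight_apply]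
  by_cases h : a = t
  · subst h; simp
  · simp [h]

lemma integral_comp_flip (t : Fin n) (f : E n → ℝ) :
    ∫ x, f (WithLp.toLp 2 (fun a => if a = t then -x a else x a)) ∂(unif (lpBall n p))
      = ∫ x, f x ∂(unif (lpBall n p)) := by
  have hT : ∀ (x : E n), (flipIso t x : E n) = WithLp.toLp 2 (fun a => if a = t then -x a else x a) := by
    intro x; ext a; rw [flipIso_apply]
  have h2 : ((flipIso t : E n ≃ₗᵢ[ℝ] E n) : E n → E n) ⁻¹' (lpBall n p) = lpBall n p := by
    ext x
    simp only [Set.mem_preimage, lpBall, Set.mem_setOf_eq, hT]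
    have : ∀ a : Fin n, |if a = t then -x a else x a| = |x a| := by
      intro a; by_cases h : a = t <;> simp [h]
    simp only [this]
  have := integral_comp_iso (flipIso t) h2 f
  simp only [hT] at this
  exact this

lemma flip_M4 (t i j k l : Fin n) :
    ∫ x, (if i = t then -x i else x i) * (if j = t then -x j else x j) *
      (if k = t then -x k else x k) * (if l = t then -x l else x l) ∂(unif (lpBall n p))
    = ∫ x, x i * x j * x k * x l ∂(unif (lpBall n p)) :=
  integral_comp_flip t (fun y => y i * y j * y k * y l)

lemma flip_M2 (t i j : Fin n) :
    ∫ x, (if i = t then -x i else x i) * (if j = t then -x j else x j) ∂(unif (lpBall n p))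
    = ∫ x, x i * x j ∂(unif (lpBall n p)) :=
  integral_comp_flip t (fun y => y i * y j)

lemma perm_M4 (σ : Equiv.Perm (Fin n)) (i j k l : Fin n) :
    ∫ x, x (σ i) * x (σ j) * x (σ k) * x (σ l) ∂(unif (lpBall n p))
    = ∫ x, x i * x j * x k * x l ∂(unif (lpBall n p)) :=
  integral_comp_perm σ (fun y => y i * y j * y k * y l)

lemma perm_M2 (σ : Equiv.Perm (Fin n)) (i j : Fin n) :
    ∫ x, x (σ i) * x (σ j) ∂(unif (lpBall n p)) = ∫ x, x i * x j ∂(unif (lpBall n p)) :=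
  integral_comp_perm σ (fun y => y i * y j)

lemma M4_zero (t i j k l : Fin n)
    (hodd : ((if i = t then (-1:ℝ) else 1) * (if j = t then (-1:ℝ) else 1) *
      (if k = t then (-1:ℝ) else 1) * (if l = t then (-1:ℝ) else 1)) = -1) :
    ∫ x, x i * x j * x k * x l ∂(unif (lpBall n p)) = 0 := by
  have e1 : ∀ x : E n, (if i = t then -x i else x i) * (if j = t then -x j else x j) *
      (if k = t then -x k else x k) * (if l = t then -x l else x l)
      = ((if i = t then (-1:ℝ) else 1) * (if j = t then (-1:ℝ) else 1) *
      (if k = t then (-1:ℝ) else 1) * (if l = t then (-1:ℝ) else 1)) * (x i * x j * x k * x l) := by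
    intro x; split_ifs <;> ring
  have h := flip_M4 (p := p) t i j k l
  simp only [e1, hodd, neg_one_mul, integral_neg] at h
  linarith

lemma M2_zero (i j : Fin n) (hij : i ≠ j) :
    ∫ x, x i * x j ∂(unif (lpBall n p)) = 0 := by
  have e1 : ∀ x : E n, (if i = i then -x i else x i) * (if j = i then -x j else x j)
      = -(x i * x j) := by
    intro x
    rw [if_pos rfl, if_neg (fun h => hij h.symm)]
    ring
  have h := flip_M2 (p := p) i i j
  rw [show (fun x : E n => (if i = i then -x i else x i) * (if j = i then -x j else x j))
      = fun x => -(x i * x j) from funext e1, integral_neg] at h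
  linarith

lemma aux_zero_lt (hn : 2 ≤ n) : 0 < n := by omega

lemma aux_one_lt (hn : 2 ≤ n) : 1 < n := by omega

lemma M4_diag (hn : 2 ≤ n) (i : Fin n) :
    ∫ x, x i * x i * x i * x i ∂(unif (lpBall n p))
    = ∫ x, x (⟨0, aux_zero_lt hn⟩ : Fin n) * x ⟨0, aux_zero_lt hn⟩ * x ⟨0, aux_zero_lt hn⟩ * x ⟨0, aux_zero_lt hn⟩
        ∂(unif (lpBall n p)) := by
  have h := perm_M4 (p := p) (Equiv.swap (⟨0, aux_zero_lt hn⟩ : Fin n) i)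
    (⟨0, aux_zero_lt hn⟩ : Fin n) ⟨0, aux_zero_lt hn⟩ ⟨0, aux_zero_lt hn⟩ ⟨0, aux_zero_lt hn⟩
  rwa [Equiv.swap_apply_left] at h

lemma M2_diag (hn : 2 ≤ n) (i : Fin n) :
    ∫ x, x i * x i ∂(unif (lpBall n p))
    = ∫ x, x (⟨0, aux_zero_lt hn⟩ : Fin n) * x ⟨0, aux_zero_lt hn⟩ ∂(unif (lpBall n p)) := by
  have h := perm_M2 (p := p) (Equiv.swap (⟨0, aux_zero_lt hn⟩ : Fin n) i)
    (⟨0, aux_zero_lt hn⟩ : Fin n) ⟨0, aux_zero_lt hn⟩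
  rwa [Equiv.swap_apply_left] at h

lemma M4_pair (hn : 2 ≤ n) (i j : Fin n) (hij : i ≠ j) :
    ∫ x, x i * x i * x j * x j ∂(unif (lpBall n p))
    = ∫ x, x (⟨0, aux_zero_lt hn⟩ : Fin n) * x ⟨0, aux_zero_lt hn⟩ * x (⟨1, aux_one_lt hn⟩ : Fin n) * x ⟨1, aux_one_lt hn⟩
        ∂(unif (lpBall n p)) := by
  set z : Fin n := ⟨0, aux_zero_lt hn⟩
  set o : Fin n := ⟨1, aux_one_lt hn⟩
  have hzo : z ≠ o := Fin.ne_of_val_ne (by norm_num)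
  set τ : Equiv.Perm (Fin n) := Equiv.swap z i with hτ
  have hzj : z ≠ τ.symm j := by
    intro h
    apply hij
    have : τ z = j := by rw [h, Equiv.apply_symm_apply]
    rw [← this, hτ, Equiv.swap_apply_left]
  set σ : Equiv.Perm (Fin n) := (Equiv.swap o (τ.symm j)).trans τ with hσ
  have hσz : σ z = i := by
    rw [hσ]
    simp only [Equiv.trans_apply]
    rw [Equiv.swap_apply_of_ne_of_ne hzo hzj, hτ, Equiv.swap_apply_left]
  have hσo : σ o = j := by
    rw [hσ]
    simp only [Equiv.trans_apply]
    rw [Equiv.swap_apply_left, Equiv.apply_symm_apply]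
  have h := perm_M4 (p := p) σ z z o o
  rwa [hσz, hσo] at h

lemma M4_formula (hn : 2 ≤ n) (i j k l : Fin n) :
    ∫ x, x i * x j * x k * x l ∂(unif (lpBall n p))
      = (∫ x, x (⟨0, aux_zero_lt hn⟩ : Fin n) * x ⟨0, aux_zero_lt hn⟩ * x (⟨1, aux_one_lt hn⟩ : Fin n) *
            x ⟨1, aux_one_lt hn⟩ ∂(unif (lpBall n p)))
          * ((if i = j then (1:ℝ) else 0) * (if k = l then (1:ℝ) else 0)
            + (if i = k then (1:ℝ) else 0) * (if j = l then (1:ℝ) else 0)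
            + (if i = l then (1:ℝ) else 0) * (if j = k then (1:ℝ) else 0))
        + ((∫ x, x (⟨0, aux_zero_lt hn⟩ : Fin n) * x ⟨0, aux_zero_lt hn⟩ * x ⟨0, aux_zero_lt hn⟩ *
            x ⟨0, aux_zero_lt hn⟩ ∂(unif (lpBall n p)))
            - 3 * (∫ x, x (⟨0, aux_zero_lt hn⟩ : Fin n) * x ⟨0, aux_zero_lt hn⟩ * x (⟨1, aux_one_lt hn⟩ : Fin n) *
            x ⟨1, aux_one_lt hn⟩ ∂(unif (lpBall n p))))
          * ((if i = j then (1:ℝ) else 0) * (if i = k then (1:ℝ) else 0) *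
            (if i = l then (1:ℝ) else 0)) := by
  by_cases hij : i = j
  · subst hij
    by_cases hik : i = k
    · subst hik
      by_cases hil : i = l
      · subst hil
        rw [M4_diag hn i]
        simp
        ring
      · have hli : ¬ l = i := fun h => hil h.symm
        rw [M4_zero (p := p) l i i i l (by simp [hil])]
        simp [hil]
      -- zero, t = l
    · have hki : ¬ k = i := fun h => hik h.symm
      by_cases hil : i = l
      · subst hil
        rw [M4_zero (p := p) k i i k i (by simp [hik, hki])]
        simp [hik, hki]
      · by_cases hkl : k = l
        · subst hkl
          rw [M4_pair hn i k hik]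
          simp [hik, hki, hil]
        · have hlk : ¬ l = k := fun h => hkl h.symm
          rw [M4_zero (p := p) k i i k l (by simp [hik, hki, hlk])]
          simp [hik, hki, hil, hkl, hlk]
  · have hji : ¬ j = i := fun h => hij h.symm
    by_cases hik : i = k
    · subst hik
      by_cases hjl : j = l
      · subst hjl
        rw [show (fun x : E n => x i * x j * x i * x j) = fun x => x i * x i * x j * x j
            from funext fun x => by ring]
        rw [M4_pair hn i j hij]
        simp [hij, hji]
      · have hlj : ¬ l = j := fun h => hjl h.symm
        rw [M4_zero (p := p) j i j i l (by simp [hij, hji, hjl, hlj])]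
        simp [hij, hji, hjl, hlj]
    · have hki : ¬ k = i := fun h => hik h.symm
      by_cases hil : i = l
      · subst hil
        by_cases hjk : j = k
        · subst hjk
          rw [show (fun x : E n => x i * x j * x j * x i) = fun x => x i * x i * x j * x j
              from funext fun x => by ring]
          rw [M4_pair hn i j hij]
          simp [hij, hji, hik, hki]
        · have hkj : ¬ k = j := fun h => hjk h.symm
          rw [M4_zero (p := p) j i j k i (by simp [hij, hji, hkj])]
          simp [hij, hji, hik, hki, hjk, hkj]
      · have hli : ¬ l = i := fun h => hil h.symm
        rw [M4_zero (p := p) i i j k l (by simp [hji, hki, hli])]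
        simp [hij, hji, hik, hki, hil, hli]

lemma M2_formula (hn : 2 ≤ n) (i j : Fin n) :
    ∫ x, x i * x j ∂(unif (lpBall n p))
      = (∫ x, x (⟨0, aux_zero_lt hn⟩ : Fin n) * x ⟨0, aux_zero_lt hn⟩ ∂(unif (lpBall n p)))
          * (if i = j then (1:ℝ) else 0) := by
  by_cases hij : i = j
  · subst hij
    rw [M2_diag hn i]
    simp
  · rw [M2_zero i j hij]
    simp [hij]

lemma integrable_P2 (hp : 1 ≤ p) (i j : Fin n) :
    Integrable (fun x : E n => x i * x j) (unif (lpBall n p)) := by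
  apply integrable_bdd (fun x : E n => x i * x j) (((measurable_pi_apply i).comp (WithLp.measurable_ofLp _ _)).mul ((measurable_pi_apply j).comp (WithLp.measurable_ofLp _ _))) 1
  intro x hx
  rw [abs_mul]
  exact mul_le_one₀ (abs_coord_le hp hx i) (abs_nonneg _) (abs_coord_le hp hx j)

lemma integrable_P4 (hp : 1 ≤ p) (i j k l : Fin n) :
    Integrable (fun x : E n => x i * x j * x k * x l) (unif (lpBall n p)) := by
  apply integrable_bdd (fun x : E n => x i * x j * x k * x l) (((((measurable_pi_apply i).comp (WithLp.measurable_ofLp _ _)).mul ((measurable_pi_apply j).comp (WithLp.measurable_ofLp _ _))).mul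
    ((measurable_pi_apply k).comp (WithLp.measurable_ofLp _ _))).mul ((measurable_pi_apply l).comp (WithLp.measurable_ofLp _ _))) 1
  intro x hx
  rw [abs_mul, abs_mul, abs_mul]
  have h1 := abs_coord_le hp hx i
  have h2 := abs_coord_le hp hx j
  have h3 := abs_coord_le hp hx k
  have h4 := abs_coord_le hp hx l
  exact mul_le_one₀ (mul_le_one₀ (mul_le_one₀ h1 (abs_nonneg _) h2) (abs_nonneg _) h3)
    (abs_nonneg _) h4

lemma inner_expand (x η : E n) : ⟪x, η⟫ = ∑ i2, x i2 * η i2 := by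
  rw [PiLp.inner_apply]
  simp [RCLike.inner_apply, conj_trivial]
  exact Finset.sum_congr rfl fun _ _ => mul_comm _ _

lemma sq_expand (η x : E n) :
    ⟪x, η⟫ ^ 2 = ∑ i2, ∑ j2, η i2 * η j2 * (x i2 * x j2) := by
  rw [inner_expand, pow_two, Finset.sum_mul_sum]
  exact Finset.sum_congr rfl fun i _ => Finset.sum_congr rfl fun j _ => by ring

lemma quad_expand (a b x : E n) :
    ⟪x, a⟫ ^ 2 * ⟪x, b⟫ ^ 2
      = ∑ i, ∑ j, ∑ k, ∑ l, a i * a j * (b k * b l) * (x i * x j * x k * x l) := by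
  rw [sq_expand a x, sq_expand b x, Finset.sum_mul]
  refine Finset.sum_congr rfl fun i _ => ?_
  rw [Finset.sum_mul]
  refine Finset.sum_congr rfl fun j _ => ?_
  rw [Finset.mul_sum]
  refine Finset.sum_congr rfl fun k _ => ?_
  rw [Finset.mul_sum]
  exact Finset.sum_congr rfl fun l _ => by ring

lemma integral_sq (hn : 2 ≤ n) (hp : 1 ≤ p) (η : E n) (hη : ∑ i2, η i2 * η i2 = 1) :
    ∫ x, ⟪x, η⟫ ^ 2 ∂(unif (lpBall n p))
      = ∫ x, x (⟨0, aux_zero_lt hn⟩ : Fin n) * x ⟨0, aux_zero_lt hn⟩ ∂(unif (lpBall n p)) := by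
  rw [show (fun x : E n => ⟪x, η⟫ ^ 2)
      = fun x => ∑ i2, ∑ j2, η i2 * η j2 * (x i2 * x j2) from funext fun x => sq_expand η x]
  rw [integral_finset_sum _ (fun i _ => integrable_finset_sum _
    (fun j _ => (integrable_P2 hp i j).const_mul _))]
  have step : ∀ i : Fin n, ∫ x, (∑ j2, η i * η j2 * (x i * x j2)) ∂(unif (lpBall n p))
      = ∑ j2, η i * η j2 * ∫ x, x i * x j2 ∂(unif (lpBall n p)) := by
    intro i
    rw [integral_finset_sum _ (fun j _ => (integrable_P2 hp i j).const_mul _)]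
    exact Finset.sum_congr rfl fun j _ => integral_const_mul _ _
  simp only [step]
  have e2 : ∀ i j : Fin n, η i * η j * ∫ x, x i * x j ∂(unif (lpBall n p))
      = if i = j then η i * η j * (∫ x, x (⟨0, aux_zero_lt hn⟩ : Fin n) * x ⟨0, aux_zero_lt hn⟩
        ∂(unif (lpBall n p))) else 0 := by
    intro i j
    rw [M2_formula hn i j]
    split <;> ring
  simp only [e2, Finset.sum_ite_eq, Finset.mem_univ, if_true]
  rw [show (∑ i2, η i2 * η i2 * ∫ x, x (⟨0, aux_zero_lt hn⟩ : Fin n) * x ⟨0, aux_zero_lt hn⟩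
        ∂(unif (lpBall n p)))
      = (∑ i2, η i2 * η i2) * ∫ x, x (⟨0, aux_zero_lt hn⟩ : Fin n) * x ⟨0, aux_zero_lt hn⟩
        ∂(unif (lpBall n p)) from (Finset.sum_mul _ _ _).symm, hη, one_mul]

set_option maxRecDepth 10000 in
lemma integral_quad (hn : 2 ≤ n) (hp : 1 ≤ p) (a b : E n) :
    ∫ x, ⟪x, a⟫ ^ 2 * ⟪x, b⟫ ^ 2 ∂(unif (lpBall n p))
      = (∑ i2, a i2 * a i2) * (∑ i2, b i2 * b i2)
          * (∫ x, x (⟨0, aux_zero_lt hn⟩ : Fin n) * x ⟨0, aux_zero_lt hn⟩ * x (⟨1, aux_one_lt hn⟩ : Fin n) *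
              x ⟨1, aux_one_lt hn⟩ ∂(unif (lpBall n p)))
        + 2 * (∑ i2, a i2 * b i2) ^ 2
          * (∫ x, x (⟨0, aux_zero_lt hn⟩ : Fin n) * x ⟨0, aux_zero_lt hn⟩ * x (⟨1, aux_one_lt hn⟩ : Fin n) *
              x ⟨1, aux_one_lt hn⟩ ∂(unif (lpBall n p)))
        + (∑ i2, a i2 * b i2 * (a i2 * b i2))
          * ((∫ x, x (⟨0, aux_zero_lt hn⟩ : Fin n) * x ⟨0, aux_zero_lt hn⟩ * x ⟨0, aux_zero_lt hn⟩ *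
              x ⟨0, aux_zero_lt hn⟩ ∂(unif (lpBall n p)))
            - 3 * (∫ x, x (⟨0, aux_zero_lt hn⟩ : Fin n) * x ⟨0, aux_zero_lt hn⟩ * x (⟨1, aux_one_lt hn⟩ : Fin n) *
              x ⟨1, aux_one_lt hn⟩ ∂(unif (lpBall n p)))) := by
  set B := ∫ x, x (⟨0, aux_zero_lt hn⟩ : Fin n) * x ⟨0, aux_zero_lt hn⟩ * x (⟨1, aux_one_lt hn⟩ : Fin n) *
      x ⟨1, aux_one_lt hn⟩ ∂(unif (lpBall n p)) with hBdef
  set A := ∫ x, x (⟨0, aux_zero_lt hn⟩ : Fin n) * x ⟨0, aux_zero_lt hn⟩ * x ⟨0, aux_zero_lt hn⟩ *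
      x ⟨0, aux_zero_lt hn⟩ ∂(unif (lpBall n p)) with hAdef
  rw [show (fun x : E n => ⟪x, a⟫ ^ 2 * ⟪x, b⟫ ^ 2)
      = fun x => ∑ i, ∑ j, ∑ k, ∑ l, a i * a j * (b k * b l) * (x i * x j * x k * x l)
      from funext fun x => quad_expand a b x]
  rw [integral_finset_sum _ (fun i _ => integrable_finset_sum _ (fun j _ =>
    integrable_finset_sum _ (fun k _ => integrable_finset_sum _ (fun l _ =>
      (integrable_P4 hp i j k l).const_mul _))))]
  have step : ∀ i : Fin n,
      ∫ x, (∑ j, ∑ k, ∑ l, a i * a j * (b k * b l) * (x i * x j * x k * x l))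
        ∂(unif (lpBall n p))
      = ∑ j, ∑ k, ∑ l, a i * a j * (b k * b l)
          * ∫ x, x i * x j * x k * x l ∂(unif (lpBall n p)) := by
    intro i
    rw [integral_finset_sum _ (fun j _ => integrable_finset_sum _ (fun k _ =>
      integrable_finset_sum _ (fun l _ => (integrable_P4 hp i j k l).const_mul _)))]
    refine Finset.sum_congr rfl fun j _ => ?_
    rw [integral_finset_sum _ (fun k _ => integrable_finset_sum _ (fun l _ =>
      (integrable_P4 hp i j k l).const_mul _))]
    refine Finset.sum_congr rfl fun k _ => ?_
    rw [integral_finset_sum _ (fun l _ => (integrable_P4 hp i j k l).const_mul _)]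
    exact Finset.sum_congr rfl fun l _ => integral_const_mul _ _
  simp only [step]
  have e4 : ∀ i j k l : Fin n,
      a i * a j * (b k * b l) * ∫ x, x i * x j * x k * x l ∂(unif (lpBall n p))
      = (if i = j then a i * a j else 0) * (if k = l then b k * b l * B else 0)
        + (if i = k then a i * b k else 0) * (if j = l then a j * b l * B else 0)
        + (if i = l then a i * b l else 0) * (if j = k then a j * b k * B else 0)
        + (if i = j then a i * a j else 0) * ((if i = k then b k else 0)
            * (if i = l then b l * (A - 3 * B) else 0)) := by
    intro i j k l
    rw [M4_formula hn i j k l, ← hBdef, ← hAdef]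
    split_ifs <;> ring
  simp only [e4]
  simp only [Finset.sum_add_distrib, mul_ite, ite_mul, mul_zero, zero_mul, mul_one,
    Finset.sum_ite_eq, Finset.sum_ite_eq', Finset.sum_ite_irrel, Finset.sum_const_zero,
    Finset.mem_univ, if_true]
  have h1 : (∑ x : Fin n, ∑ y : Fin n, a x * a x * (b y * b y * B))
      = (∑ x : Fin n, a x * a x) * (∑ x : Fin n, b x * b x) * B := by
    rw [Finset.sum_comm]
    simp only [Finset.sum_mul, Finset.mul_sum]
    exact Finset.sum_congr rfl fun i _ => Finset.sum_congr rfl fun j _ => by ring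
  have h2 : (∑ x : Fin n, ∑ y : Fin n, a x * b x * (a y * b y * B))
      = (∑ x : Fin n, a x * b x) ^ 2 * B := by
    rw [Finset.sum_comm]
    simp only [pow_two, Finset.sum_mul, Finset.mul_sum]
    exact Finset.sum_congr rfl fun i _ => Finset.sum_congr rfl fun j _ => by ring
  have h4 : (∑ x : Fin n, a x * a x * (b x * (b x * (A - 3 * B))))
      = (∑ x : Fin n, a x * b x * (a x * b x)) * (A - 3 * B) := by
    simp only [Finset.sum_mul]
    exact Finset.sum_congr rfl fun i _ => by ring
  rw [h1, h2, h4]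
  ring

lemma covf_master (hn : 2 ≤ n) (hp : 1 ≤ p) (a b : E n)
    (ha : ∑ i2, a i2 * a i2 = 1) (hb : ∑ i2, b i2 * b i2 = 1)
    (hab : ∑ i2, a i2 * b i2 = 0) :
    covf (unif (lpBall n p)) a b
      = (∫ x, x (⟨0, aux_zero_lt hn⟩ : Fin n) * x ⟨0, aux_zero_lt hn⟩ * x (⟨1, aux_one_lt hn⟩ : Fin n) *
            x ⟨1, aux_one_lt hn⟩ ∂(unif (lpBall n p)))
        + (∑ i2, a i2 * b i2 * (a i2 * b i2))
          * ((∫ x, x (⟨0, aux_zero_lt hn⟩ : Fin n) * x ⟨0, aux_zero_lt hn⟩ * x ⟨0, aux_zero_lt hn⟩ *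
              x ⟨0, aux_zero_lt hn⟩ ∂(unif (lpBall n p)))
            - 3 * (∫ x, x (⟨0, aux_zero_lt hn⟩ : Fin n) * x ⟨0, aux_zero_lt hn⟩ * x (⟨1, aux_one_lt hn⟩ : Fin n) *
              x ⟨1, aux_one_lt hn⟩ ∂(unif (lpBall n p))))
        - (∫ x, x (⟨0, aux_zero_lt hn⟩ : Fin n) * x ⟨0, aux_zero_lt hn⟩ ∂(unif (lpBall n p)))
          * (∫ x, x (⟨0, aux_zero_lt hn⟩ : Fin n) * x ⟨0, aux_zero_lt hn⟩ ∂(unif (lpBall n p))) := by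
  rw [covf, integral_quad hn hp a b, integral_sq hn hp a ha, integral_sq hn hp b hb, ha, hb, hab]
  ring

lemma sum_two {z o : Fin n} (hzo : z ≠ o) (c d : ℝ) :
    ∑ i2 : Fin n, (if i2 = z then c else if i2 = o then d else 0) = c + d := by
  rw [Finset.sum_congr rfl (fun i2 _ =>
    show (if i2 = z then c else if i2 = o then d else 0)
      = (if i2 = z then c else 0) + (if i2 = o then d else 0) from by
        by_cases h1 : i2 = z
        · subst h1
          simp [hzo]
        · simp [h1])]
  rw [Finset.sum_add_distrib]
  simp [Finset.sum_ite_eq']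


/-- decomposition of `f(η₁,η₂)` on `B_p^n` in terms of the extremal values and
`∑ η₁(i)²η₂(i)²`. -/
theorem covf_decomposition_Bpn
    (n : ℕ) (hn : 2 ≤ n) (p : ℝ) (hp : 1 ≤ p)
    (η₁ η₂ : E n) (hη₁ : ‖η₁‖ = 1) (hη₂ : ‖η₂‖ = 1) (hortho : ⟪η₁, η₂⟫ = 0) :
    covf (unif (lpBall n p)) η₁ η₂ =
      covf (unif (lpBall n p)) (stdb (⟨0, by omega⟩ : Fin n)) (stdb ⟨1, by omega⟩) +
      2 * (covf (unif (lpBall n p))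
            ((Real.sqrt 2)⁻¹ • (stdb (⟨0, by omega⟩ : Fin n) + stdb ⟨1, by omega⟩))
            ((Real.sqrt 2)⁻¹ • (stdb (⟨0, by omega⟩ : Fin n) - stdb ⟨1, by omega⟩)) -
          covf (unif (lpBall n p)) (stdb (⟨0, by omega⟩ : Fin n)) (stdb ⟨1, by omega⟩)) *
        ∑ i, η₁ i ^ 2 * η₂ i ^ 2 := by
  set z : Fin n := ⟨0, by omega⟩ with hzdef
  set o : Fin n := ⟨1, by omega⟩ with hodef
  have hzo : z ≠ o := Fin.ne_of_val_ne (by norm_num)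
  have hoz : o ≠ z := fun h => hzo h.symm
  have hnorm : ∀ η : E n, ‖η‖ = 1 → ∑ i2, η i2 * η i2 = 1 := by
    intro η hη
    have h := EuclideanSpace.norm_eq η
    rw [hη] at h
    have h2 : ∑ i2, ‖η i2‖ ^ 2 = 1 := Real.sqrt_eq_one.mp h.symm
    calc ∑ i2, η i2 * η i2 = ∑ i2, ‖η i2‖ ^ 2 :=
          Finset.sum_congr rfl fun i2 _ => by rw [Real.norm_eq_abs, sq_abs, pow_two]
      _ = 1 := h2
  have ha1 : ∑ i2, η₁ i2 * η₁ i2 = 1 := hnorm η₁ hη₁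
  have ha2 : ∑ i2, η₂ i2 * η₂ i2 = 1 := hnorm η₂ hη₂
  have hab : ∑ i2, η₁ i2 * η₂ i2 = 0 := by
    rw [← inner_expand η₁ η₂]; exact hortho
  have hstdb : ∀ (u : Fin n) (i2 : Fin n), stdb (n := n) u i2 = if i2 = u then (1:ℝ) else 0 := by
    intro u i2
    simp [stdb, EuclideanSpace.single_apply]
  have hsz : ∑ i2, stdb (n := n) z i2 * stdb z i2 = 1 := by
    rw [Finset.sum_congr rfl (fun i2 _ =>
      show stdb (n := n) z i2 * stdb z i2
        = if i2 = z then (1:ℝ) else if i2 = o then 0 else 0 from by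
          by_cases h1 : i2 = z <;> by_cases h2 : i2 = o <;>
            simp [hstdb, h1, h2, hzo, hoz]), sum_two hzo]
    norm_num
  have hso : ∑ i2, stdb (n := n) o i2 * stdb o i2 = 1 := by
    rw [Finset.sum_congr rfl (fun i2 _ =>
      show stdb (n := n) o i2 * stdb o i2
        = if i2 = z then (0:ℝ) else if i2 = o then 1 else 0 from by
          by_cases h1 : i2 = z <;> by_cases h2 : i2 = o <;>
            simp [hstdb, h1, h2, hzo, hoz]), sum_two hzo]
    norm_num
  have hszo : ∑ i2, stdb (n := n) z i2 * stdb o i2 = 0 := by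
    rw [Finset.sum_congr rfl (fun i2 _ =>
      show stdb (n := n) z i2 * stdb o i2
        = if i2 = z then (0:ℝ) else if i2 = o then 0 else 0 from by
          by_cases h1 : i2 = z <;> by_cases h2 : i2 = o <;>
            simp [hstdb, h1, h2, hzo, hoz]), sum_two hzo]
    norm_num
  have hSe : ∑ i2, stdb (n := n) z i2 * stdb o i2 * (stdb z i2 * stdb o i2) = 0 := by
    rw [Finset.sum_congr rfl (fun i2 _ =>
      show stdb (n := n) z i2 * stdb o i2 * (stdb z i2 * stdb o i2)
        = if i2 = z then (0:ℝ) else if i2 = o then 0 else 0 from by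
          by_cases h1 : i2 = z <;> by_cases h2 : i2 = o <;>
            simp [hstdb, h1, h2, hzo, hoz]), sum_two hzo]
    norm_num
  set c : ℝ := (Real.sqrt 2)⁻¹ with hcdef
  have hc : c * c = 1 / 2 := by
    rw [hcdef, ← mul_inv, Real.mul_self_sqrt (by norm_num)]
    norm_num
  set ξ1 : E n := c • (stdb z + stdb o) with hx1def
  set ξ2 : E n := c • (stdb z - stdb o) with hx2def
  have hξ1 : ∀ i2 : Fin n, ξ1 i2 = if i2 = z then c else if i2 = o then c else 0 := by
    intro i2
    have happ : ξ1 i2 = c * (stdb z i2 + stdb o i2) := rfl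
    rw [happ, hstdb, hstdb]
    by_cases h1 : i2 = z <;> by_cases h2 : i2 = o <;> simp [h1, h2, hzo, hoz]
  have hξ2 : ∀ i2 : Fin n, ξ2 i2 = if i2 = z then c else if i2 = o then -c else 0 := by
    intro i2
    have happ : ξ2 i2 = c * (stdb z i2 - stdb o i2) := rfl
    rw [happ, hstdb, hstdb]
    by_cases h1 : i2 = z <;> by_cases h2 : i2 = o <;> simp [h1, h2, hzo, hoz]
  have hx11 : ∑ i2, ξ1 i2 * ξ1 i2 = 1 := by
    rw [Finset.sum_congr rfl (fun i2 _ =>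
      show ξ1 i2 * ξ1 i2 = if i2 = z then (1:ℝ)/2 else if i2 = o then 1/2 else 0 from by
        rw [hξ1 i2]
        by_cases h1 : i2 = z <;> by_cases h2 : i2 = o <;>
          simp [h1, h2, hzo, hoz, hc]), sum_two hzo]
    norm_num
  have hx22 : ∑ i2, ξ2 i2 * ξ2 i2 = 1 := by
    rw [Finset.sum_congr rfl (fun i2 _ =>
      show ξ2 i2 * ξ2 i2 = if i2 = z then (1:ℝ)/2 else if i2 = o then 1/2 else 0 from by
        rw [hξ2 i2]
        by_cases h1 : i2 = z <;> by_cases h2 : i2 = o <;>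
          simp [h1, h2, hzo, hoz, mul_neg, neg_mul, neg_neg, hc]), sum_two hzo]
    norm_num
  have hx12 : ∑ i2, ξ1 i2 * ξ2 i2 = 0 := by
    rw [Finset.sum_congr rfl (fun i2 _ =>
      show ξ1 i2 * ξ2 i2 = if i2 = z then (1:ℝ)/2 else if i2 = o then -(1/2) else 0 from by
        rw [hξ1 i2, hξ2 i2]
        by_cases h1 : i2 = z <;> by_cases h2 : i2 = o <;>
          simp [h1, h2, hzo, hoz, mul_neg, neg_mul, neg_neg, hc]), sum_two hzo]
    norm_num
  have hSx : ∑ i2, ξ1 i2 * ξ2 i2 * (ξ1 i2 * ξ2 i2) = 1/2 := by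
    rw [Finset.sum_congr rfl (fun i2 _ =>
      show ξ1 i2 * ξ2 i2 * (ξ1 i2 * ξ2 i2)
          = if i2 = z then (1:ℝ)/4 else if i2 = o then 1/4 else 0 from by
        rw [hξ1 i2, hξ2 i2]
        by_cases h1 : i2 = z <;> by_cases h2 : i2 = o <;>
          simp [h1, h2, hzo, hoz, mul_neg, neg_mul, neg_neg] <;> nlinarith [hc]), sum_two hzo]
    norm_num
  rw [covf_master hn hp η₁ η₂ ha1 ha2 hab,
    covf_master hn hp (stdb z) (stdb o) hsz hso hszo,
    covf_master hn hp ξ1 ξ2 hx11 hx22 hx12,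
    hSe, hSx]
  have hS : ∑ i, η₁ i ^ 2 * η₂ i ^ 2 = ∑ i2, η₁ i2 * η₂ i2 * (η₁ i2 * η₂ i2) :=
    Finset.sum_congr rfl fun i _ => by ring
  rw [hS]
  ring
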